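/- arXiv:2305.04803 — 2 statements merged into one kernel-verified Lean document; each statement's English description precedes it below -/
import Mathlib

section
/- Let Λ and H be countable discrete groups with H finite, let (K_Λ, β_Λ) be a Bohr compactification of Λ, and let (K_H, β_H) be a Bohr compactification of H. Form the semidirect product (∏_{h∈H} K_Λ) ⋊ K_H, where K_H acts by permuting coordinates through the isomorphism β_H (H being finite, β_H is an isomorphism H ≅ K_H). Then this semidirect product, together with the homomorphism Λ ≀ H → (∏_{h∈H} K_Λ) ⋊ K_H sending (f, h) to ((β_Λ(f(h')))_{h'∈H}, β_H(h)), is a Bohr compactification of the wreath product Λ ≀ H. The analogous statement holds for profinite completions. -/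
universe u v w

/-- `(K, β)` is a Bohr compactification of `G`. -/
def IsBohrCompactification (G : Type u) [Group G] [TopologicalSpace G]
    (K : Type v) [Group K] [TopologicalSpace K] (β : G →* K) : Prop :=
  IsTopologicalGroup K ∧ CompactSpace K ∧ T2Space K ∧ Continuous β ∧ DenseRange β ∧
    ∀ (L : Type w) [Group L] [TopologicalSpace L] [IsTopologicalGroup L] [CompactSpace L]
      [T2Space L] (α : G →* L), Continuous α →
        ∃ α' : K →* L, Continuous α' ∧ α = α'.comp β

/-- `(K, α)` is a profinite completion of `G`. -/
def IsProfiniteCompletion (G : Type u) [Group G] [TopologicalSpace G]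
    (K : Type v) [Group K] [TopologicalSpace K] (α : G →* K) : Prop :=
  IsTopologicalGroup K ∧ CompactSpace K ∧ T2Space K ∧ TotallyDisconnectedSpace K ∧
    Continuous α ∧ DenseRange α ∧
    ∀ (L : Type w) [Group L] [TopologicalSpace L] [IsTopologicalGroup L] [CompactSpace L]
      [T2Space L] [TotallyDisconnectedSpace L] (γ : G →* L), Continuous γ →
        ∃ γ' : K →* L, Continuous γ' ∧ γ = γ'.comp α

/-- The restricted direct product `⊕_{h ∈ H} Λ`: finitely supported functions `H → Λ`. -/
def restrictedProduct (H : Type u) (Λ : Type v) [Group Λ] : Subgroup (H → Λ) where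
  carrier := {f | (Function.mulSupport f).Finite}
  one_mem' := by simp
  mul_mem' := by
    intro f g hf hg
    exact Set.Finite.subset (hf.union hg) (Function.mulSupport_mul f g)
  inv_mem' := by
    intro f hf
    simpa using hf

/-- The shift of a finitely supported function: `(h · f)(h') = f (h⁻¹ h')`. -/
def shiftEquiv (Λ : Type v) (H : Type u) [Group Λ] [Group H] (h : H) :
    restrictedProduct H Λ ≃* restrictedProduct H Λ where
  toFun f := ⟨fun h' => (f : H → Λ) (h⁻¹ * h'), by
    refine Set.Finite.subset (f.2.image (h * ·)) ?_
    intro h' hh'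
    exact ⟨h⁻¹ * h', hh', by group⟩⟩
  invFun f := ⟨fun h' => (f : H → Λ) (h * h'), by
    refine Set.Finite.subset (f.2.image (h⁻¹ * ·)) ?_
    intro h' hh'
    exact ⟨h * h', hh', by group⟩⟩
  left_inv f := by ext h'; simp
  right_inv f := by ext h'; simp
  map_mul' f g := by ext h'; simp [Subgroup.coe_mul]

/-- The shift action of `H` on `⊕_{h ∈ H} Λ`. -/
def shiftAut (Λ : Type v) (H : Type u) [Group Λ] [Group H] :
    H →* MulAut (restrictedProduct H Λ) where
  toFun h := shiftEquiv Λ H h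
  map_one' := by
    ext f h'
    simp [shiftEquiv]
  map_mul' h₁ h₂ := by
    ext f h'
    simp [shiftEquiv, mul_assoc]

/-- The wreath product `Λ ≀ H`. -/
def Wreath (Λ : Type v) (H : Type u) [Group Λ] [Group H] : Type (max u v) :=
  restrictedProduct H Λ ⋊[shiftAut Λ H] H

instance (Λ : Type v) (H : Type u) [Group Λ] [Group H] : Group (Wreath Λ H) :=
  inferInstanceAs (Group (restrictedProduct H Λ ⋊[shiftAut Λ H] H))

instance (Λ : Type v) (H : Type u) [Group Λ] [Group H] : TopologicalSpace (Wreath Λ H) := ⊥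

instance (Λ : Type v) (H : Type u) [Group Λ] [Group H] : DiscreteTopology (Wreath Λ H) :=
  ⟨rfl⟩

/-- The permutation action `(h · F)(h') = F (h⁻¹ h')` of `H` on a full direct product. -/
def permEquiv (K_Λ : Type v) (H : Type u) [Group K_Λ] [Group H] (h : H) :
    (H → K_Λ) ≃* (H → K_Λ) where
  toFun F := fun h' => F (h⁻¹ * h')
  invFun F := fun h' => F (h * h')
  left_inv F := by funext h'; simp
  right_inv F := by funext h'; simp
  map_mul' F G := rfl

/-- The permutation action of `H` on `∏_{h ∈ H} K_Λ`. -/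
def permAut (K_Λ : Type v) (H : Type u) [Group K_Λ] [Group H] : H →* MulAut (H → K_Λ) where
  toFun h := permEquiv K_Λ H h
  map_one' := by
    ext F h'
    simp [permEquiv]
  map_mul' h₁ h₂ := by
    ext F h'
    simp [permEquiv, mul_assoc]

/-- The coordinatewise extension of `βΛ : Λ →* K_Λ` to `⊕_H Λ →* ∏_H K_Λ`. -/
def toPiMap {Λ : Type v} {K_Λ : Type w} [Group Λ] [Group K_Λ] (H : Type u) (βΛ : Λ →* K_Λ) :
    restrictedProduct H Λ →* (H → K_Λ) where
  toFun f := fun h' => βΛ ((f : H → Λ) h')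
  map_one' := by funext h'; simp
  map_mul' a b := by funext h'; simp

/-- The topology on a semidirect product induced by the product topology. -/
instance SemidirectProduct.instTopSpace {N' : Type u} {H' : Type v} [Group N'] [Group H']
    [TopologicalSpace N'] [TopologicalSpace H'] {φ : H' →* MulAut N'} :
    TopologicalSpace (N' ⋊[φ] H') :=
  TopologicalSpace.induced (fun g => (g.left, g.right)) instTopologicalSpaceProd

/-- The canonical map `Λ ≀ H →* (∏_{h ∈ H} K_Λ) ⋊ K_H`, `(f, h) ↦ ((βΛ (f h'))_{h'}, βH h)`,
where `K_H` acts by permuting the coordinates through the isomorphism `e` (that is, `βH`). -/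
def wreathCompactMap {Λ : Type v} {H : Type u} {K_Λ : Type w} {K_H : Type u}
    [Group Λ] [Group H] [Group K_Λ] [Group K_H]
    (βΛ : Λ →* K_Λ) (βH : H →* K_H) (e : H ≃* K_H) (he : ∀ h : H, e h = βH h) :
    Wreath Λ H →* (H → K_Λ) ⋊[(permAut K_Λ H).comp e.symm.toMonoidHom] K_H :=
  SemidirectProduct.map (toPiMap H βΛ) βH (by
    intro h
    refine DFunLike.ext _ _ fun f => funext fun h' => ?_
    show βΛ ((f : H → Λ) (h⁻¹ * h')) = βΛ ((f : H → Λ) ((e.symm (βH h))⁻¹ * h'))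
    rw [← he, MulEquiv.symm_apply_apply])


/-! ### Auxiliary lemmas -/

section AuxTop

private lemma continuous_uncurry_of_discrete {A B C : Type*} [TopologicalSpace A]
    [DiscreteTopology A] [TopologicalSpace B] [TopologicalSpace C]
    (f : A → B → C) (hf : ∀ a, Continuous (f a)) :
    Continuous fun p : A × B => f p.1 p.2 := by
  rw [continuous_iff_continuousAt]
  rintro ⟨a, b⟩
  unfold ContinuousAt
  rw [nhds_prod_eq, nhds_discrete A, Filter.pure_prod, Filter.tendsto_map'_iff]
  exact (hf a).tendsto b

/-- The canonical homeomorphism between a (topologized) semidirect product and the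
underlying product space. -/
private def sdpHomeo (N Hg : Type*) [Group N] [Group Hg] [TopologicalSpace N]
    [TopologicalSpace Hg] (φ : Hg →* MulAut N) : (N ⋊[φ] Hg) ≃ₜ N × Hg where
  toFun g := (g.left, g.right)
  invFun p := ⟨p.1, p.2⟩
  left_inv g := rfl
  right_inv p := rfl
  continuous_toFun := continuous_induced_dom
  continuous_invFun := continuous_induced_rng.2 (continuous_fst.prodMk continuous_snd)

private lemma sdp_continuous_left {N Hg : Type*} [Group N] [Group Hg] [TopologicalSpace N]
    [TopologicalSpace Hg] {φ : Hg →* MulAut N} :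
    Continuous fun g : N ⋊[φ] Hg => g.left := by
  have h : Continuous (fun g : N ⋊[φ] Hg => (g.left, g.right)) := continuous_induced_dom
  exact h.fst

private lemma sdp_continuous_right {N Hg : Type*} [Group N] [Group Hg] [TopologicalSpace N]
    [TopologicalSpace Hg] {φ : Hg →* MulAut N} :
    Continuous fun g : N ⋊[φ] Hg => g.right := by
  have h : Continuous (fun g : N ⋊[φ] Hg => (g.left, g.right)) := continuous_induced_dom
  exact h.snd

private lemma sdp_continuous_rng {N Hg X : Type*} [Group N] [Group Hg] [TopologicalSpace N]
    [TopologicalSpace Hg] [TopologicalSpace X] {φ : Hg →* MulAut N} {f : X → N ⋊[φ] Hg}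
    (h1 : Continuous fun x => (f x).left) (h2 : Continuous fun x => (f x).right) :
    Continuous f :=
  continuous_induced_rng.2 (h1.prodMk h2)

private lemma sdp_topologicalGroup {N Hg : Type*} [Group N] [Group Hg] [TopologicalSpace N]
    [TopologicalSpace Hg] [IsTopologicalGroup N] [DiscreteTopology Hg]
    {φ : Hg →* MulAut N} (hφ : ∀ a : Hg, Continuous (φ a)) :
    IsTopologicalGroup (N ⋊[φ] Hg) := by
  have cφ : Continuous fun p : Hg × N => φ p.1 p.2 :=
    continuous_uncurry_of_discrete (fun a n => φ a n) hφ
  refine { continuous_mul := ?_, continuous_inv := ?_ }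
  · -- continuous_mul
    apply sdp_continuous_rng
    · show Continuous fun p : (N ⋊[φ] Hg) × (N ⋊[φ] Hg) => p.1.left * φ p.1.right p.2.left
      exact (sdp_continuous_left.comp continuous_fst).mul
        (cφ.comp ((sdp_continuous_right.comp continuous_fst).prodMk
          (sdp_continuous_left.comp continuous_snd)))
    · show Continuous fun p : (N ⋊[φ] Hg) × (N ⋊[φ] Hg) => p.1.right * p.2.right
      exact (sdp_continuous_right.comp continuous_fst).mul
        (sdp_continuous_right.comp continuous_snd)
  · -- continuous_inv
    apply sdp_continuous_rng
    · show Continuous fun g : N ⋊[φ] Hg => φ g.right⁻¹ g.left⁻¹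
      exact cφ.comp
        (((continuous_of_discreteTopology (α := Hg)).comp sdp_continuous_right).prodMk
          sdp_continuous_left.inv)
    · show Continuous fun g : N ⋊[φ] Hg => g.right⁻¹
      exact (continuous_of_discreteTopology (α := Hg)).comp sdp_continuous_right

private lemma continuous_noncommProd {ι X M : Type*} [TopologicalSpace X] [TopologicalSpace M]
    [Monoid M] [ContinuousMul M] (s : Finset ι) (f : ι → X → M)
    (hf : ∀ i, Continuous (f i)) (hc : ∀ (x : X) (i j : ι), i ≠ j → Commute (f i x) (f j x)) :
    Continuous fun x => s.noncommProd (fun i => f i x)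
      (fun i _ j _ hij => hc x i j hij) := by
  induction s using Finset.cons_induction with
  | empty =>
    convert continuous_const (y := (1 : M)) using 1
    funext x
    exact Finset.noncommProd_empty _ _
  | cons a s ha ih =>
    have heq : (fun x => (Finset.cons a s ha).noncommProd (fun i => f i x)
        (fun i _ j _ hij => hc x i j hij))
        = fun x => f a x * s.noncommProd (fun i => f i x) (fun i _ j _ hij => hc x i j hij) := by
      funext x
      exact Finset.noncommProd_cons _ _ _ _ _
    rw [heq]
    exact (hf a).mul ih

private lemma denseRange_pimap {I : Type*} {A B : Type*} [TopologicalSpace B]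
    {f : A → B} (hf : DenseRange f) :
    DenseRange fun (g : I → A) (i : I) => f (g i) := by
  have hrange : Set.range (fun (g : I → A) (i : I) => f (g i))
      = Set.pi Set.univ fun _ : I => Set.range f := by
    ext x
    constructor
    · rintro ⟨g, rfl⟩ i _
      exact ⟨g i, rfl⟩
    · intro hx
      choose g hg using fun i => hx i (Set.mem_univ i)
      exact ⟨g, funext hg⟩
  rw [DenseRange, hrange]
  exact dense_pi Set.univ fun i _ => hf

end AuxTop

section SmallTransfer

private lemma small_topologicalClosure {Λ : Type u} [Group Λ] [Countable Λ] {L : Type v}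
    [Group L] [TopologicalSpace L] [IsTopologicalGroup L] [T2Space L] (γ : Λ →* L) :
    Small.{w} (γ.range.topologicalClosure) := by
  obtain ⟨c, hc⟩ := Countable.exists_injective_nat Λ
  have hcu : Function.Injective fun a : Λ => ULift.up.{w} (c a) := fun a b hab =>
    hc (by simpa using hab)
  set L₀ := γ.range.topologicalClosure with hL₀
  have hL₀coe : (L₀ : Set L) = closure (Set.range γ) := by
    rw [hL₀, Subgroup.topologicalClosure_coe, MonoidHom.coe_range]
  refine small_of_injective (f := fun x : ↥L₀ => {S : Set (ULift.{w} ℕ) |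
    (x : L) ∈ closure (γ '' {a : Λ | ULift.up (c a) ∈ S})}) ?_
  intro x y hxy
  by_contra hne
  have hne' : (x : L) ≠ (y : L) := fun h => hne (Subtype.ext h)
  obtain ⟨U, V, hU, hV, hxU, hyV, hUV⟩ := t2_separation hne'
  set S : Set (ULift.{w} ℕ) := (fun a : Λ => ULift.up.{w} (c a)) '' (γ ⁻¹' U) with hS
  have hdec : {a : Λ | ULift.up.{w} (c a) ∈ S} = γ ⁻¹' U := by
    have : {a : Λ | ULift.up.{w} (c a) ∈ S} = (fun a : Λ => ULift.up.{w} (c a)) ⁻¹' S := rfl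
    rw [this, hS, Set.preimage_image_eq _ hcu]
  have hxS : (x : L) ∈ closure (γ '' {a : Λ | ULift.up (c a) ∈ S}) := by
    rw [hdec, Set.image_preimage_eq_inter_range]
    have hxcl : (x : L) ∈ closure (Set.range γ) := by
      rw [← hL₀coe]; exact x.2
    rw [mem_closure_iff] at hxcl ⊢
    intro o ho hxo
    rcases hxcl (o ∩ U) (ho.inter hU) ⟨hxo, hxU⟩ with ⟨z, ⟨hzo, hzU⟩, hzr⟩
    exact ⟨z, hzo, hzU, hzr⟩
  have hyS : (y : L) ∉ closure (γ '' {a : Λ | ULift.up (c a) ∈ S}) := by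
    rw [hdec, Set.image_preimage_eq_inter_range]
    intro hmem
    rw [mem_closure_iff] at hmem
    obtain ⟨z, hzV, hzU, -⟩ := hmem V hV hyV
    exact Set.disjoint_left.mp hUV hzU hzV
  have h2 := Set.ext_iff.mp hxy S
  exact hyS (h2.mp hxS)

private lemma universal_transfer {Λ : Type u} [Group Λ] [Countable Λ] [TopologicalSpace Λ]
    [DiscreteTopology Λ] {K : Type u'} [Group K] [TopologicalSpace K] (β : Λ →* K)
    (hUniv : ∀ (M : Type w) [Group M] [TopologicalSpace M] [IsTopologicalGroup M] [CompactSpace M]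
      [T2Space M] (γ : Λ →* M), Continuous γ →
        ∃ γ' : K →* M, Continuous γ' ∧ γ = γ'.comp β)
    {L : Type v} [Group L] [TopologicalSpace L] [IsTopologicalGroup L] [CompactSpace L]
    [T2Space L] (γ : Λ →* L) :
    ∃ γ' : K →* L, Continuous γ' ∧ γ = γ'.comp β := by
  set L₀ := γ.range.topologicalClosure with hL₀
  haveI : CompactSpace L₀ :=
    isCompact_iff_compactSpace.mp (γ.range.isClosed_topologicalClosure.isCompact)
  haveI hsmall : Small.{w} L₀ := small_topologicalClosure γ
  letI : TopologicalSpace (Shrink.{w} ↥L₀) :=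
    TopologicalSpace.induced (⇑(Shrink.mulEquiv (α := ↥L₀))) inferInstance
  set me := Shrink.mulEquiv (α := ↥L₀) with hme
  have hmec : Continuous (⇑me) := continuous_induced_dom
  have hmesc : Continuous (⇑me.symm : ↥L₀ → Shrink.{w} ↥L₀) := by
    apply continuous_induced_rng.2
    have h0 : (fun x : ↥L₀ => me (me.symm x)) = id :=
      funext fun x => me.apply_symm_apply x
    show Continuous fun x : ↥L₀ => me (me.symm x)
    rw [h0]
    exact continuous_id
  have homeo : Shrink.{w} ↥L₀ ≃ₜ L₀ :=
    { toEquiv := me.toEquiv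
      continuous_toFun := hmec
      continuous_invFun := hmesc }
  haveI : IsTopologicalGroup (Shrink.{w} ↥L₀) := by
    refine { continuous_mul := ?_, continuous_inv := ?_ }
    · have h1 : (fun p : Shrink.{w} ↥L₀ × Shrink.{w} ↥L₀ => p.1 * p.2)
          = fun p => me.symm (me p.1 * me p.2) := by
        funext p
        apply me.injective
        rw [MulEquiv.apply_symm_apply, map_mul]
      rw [h1]
      exact hmesc.comp (continuous_mul.comp
        ((hmec.comp continuous_fst).prodMk (hmec.comp continuous_snd)))
    · have h2 : (fun x : Shrink.{w} ↥L₀ => x⁻¹) = fun x => me.symm (me x)⁻¹ := by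
        funext x
        apply me.injective
        rw [MulEquiv.apply_symm_apply, map_inv]
      rw [h2]
      exact hmesc.comp hmec.inv
  haveI : CompactSpace (Shrink.{w} ↥L₀) := homeo.symm.compactSpace
  haveI : T2Space (Shrink.{w} ↥L₀) := homeo.symm.t2Space
  have hmem : ∀ a : Λ, γ a ∈ L₀ := fun a => γ.range.le_topologicalClosure ⟨a, rfl⟩
  set γ₀ : Λ →* L₀ := γ.codRestrict L₀ hmem with hγ₀
  set γ₁ : Λ →* Shrink.{w} ↥L₀ := me.symm.toMonoidHom.comp γ₀ with hγ₁
  set ρ : Shrink.{w} ↥L₀ →* L := L₀.subtype.comp me.toMonoidHom with hρ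
  have hρc : Continuous ρ := by
    have h : ⇑ρ = fun x : Shrink.{w} ↥L₀ => ((me x : ↥L₀) : L) := by
      funext x; rfl
    rw [h]
    exact continuous_subtype_val.comp hmec
  obtain ⟨ψ, hψc, hψ⟩ := hUniv (Shrink.{w} ↥L₀) γ₁ continuous_of_discreteTopology
  refine ⟨ρ.comp ψ, hρc.comp hψc, ?_⟩
  have hfac : ρ.comp γ₁ = γ := by
    ext a
    show ((me (me.symm (γ₀ a)) : L₀) : L) = γ a
    rw [MulEquiv.apply_symm_apply]
    rfl
  rw [← hfac, hψ]
  ext a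
  rfl

private lemma universal_transfer_td {Λ : Type u} [Group Λ] [Countable Λ] [TopologicalSpace Λ]
    [DiscreteTopology Λ] {K : Type u'} [Group K] [TopologicalSpace K] (β : Λ →* K)
    (hUniv : ∀ (M : Type w) [Group M] [TopologicalSpace M] [IsTopologicalGroup M] [CompactSpace M]
      [T2Space M] [TotallyDisconnectedSpace M] (γ : Λ →* M), Continuous γ →
        ∃ γ' : K →* M, Continuous γ' ∧ γ = γ'.comp β)
    {L : Type v} [Group L] [TopologicalSpace L] [IsTopologicalGroup L] [CompactSpace L]
    [T2Space L] [TotallyDisconnectedSpace L] (γ : Λ →* L) :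
    ∃ γ' : K →* L, Continuous γ' ∧ γ = γ'.comp β := by
  set L₀ := γ.range.topologicalClosure with hL₀
  haveI : CompactSpace L₀ :=
    isCompact_iff_compactSpace.mp (γ.range.isClosed_topologicalClosure.isCompact)
  haveI hsmall : Small.{w} L₀ := small_topologicalClosure γ
  letI : TopologicalSpace (Shrink.{w} ↥L₀) :=
    TopologicalSpace.induced (⇑(Shrink.mulEquiv (α := ↥L₀))) inferInstance
  set me := Shrink.mulEquiv (α := ↥L₀) with hme
  have hmec : Continuous (⇑me) := continuous_induced_dom
  have hmesc : Continuous (⇑me.symm : ↥L₀ → Shrink.{w} ↥L₀) := by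
    apply continuous_induced_rng.2
    have h0 : (fun x : ↥L₀ => me (me.symm x)) = id :=
      funext fun x => me.apply_symm_apply x
    show Continuous fun x : ↥L₀ => me (me.symm x)
    rw [h0]
    exact continuous_id
  have homeo : Shrink.{w} ↥L₀ ≃ₜ L₀ :=
    { toEquiv := me.toEquiv
      continuous_toFun := hmec
      continuous_invFun := hmesc }
  haveI : IsTopologicalGroup (Shrink.{w} ↥L₀) := by
    refine { continuous_mul := ?_, continuous_inv := ?_ }
    · have h1 : (fun p : Shrink.{w} ↥L₀ × Shrink.{w} ↥L₀ => p.1 * p.2)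
          = fun p => me.symm (me p.1 * me p.2) := by
        funext p
        apply me.injective
        rw [MulEquiv.apply_symm_apply, map_mul]
      rw [h1]
      exact hmesc.comp (continuous_mul.comp
        ((hmec.comp continuous_fst).prodMk (hmec.comp continuous_snd)))
    · have h2 : (fun x : Shrink.{w} ↥L₀ => x⁻¹) = fun x => me.symm (me x)⁻¹ := by
        funext x
        apply me.injective
        rw [MulEquiv.apply_symm_apply, map_inv]
      rw [h2]
      exact hmesc.comp hmec.inv
  haveI : CompactSpace (Shrink.{w} ↥L₀) := homeo.symm.compactSpace
  haveI : T2Space (Shrink.{w} ↥L₀) := homeo.symm.t2Space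
  haveI : TotallyDisconnectedSpace (Shrink.{w} ↥L₀) :=
    homeo.isEmbedding.isTotallyDisconnected_range.mp
      (isTotallyDisconnected_of_totallyDisconnectedSpace _)
  have hmem : ∀ a : Λ, γ a ∈ L₀ := fun a => γ.range.le_topologicalClosure ⟨a, rfl⟩
  set γ₀ : Λ →* L₀ := γ.codRestrict L₀ hmem with hγ₀
  set γ₁ : Λ →* Shrink.{w} ↥L₀ := me.symm.toMonoidHom.comp γ₀ with hγ₁
  set ρ : Shrink.{w} ↥L₀ →* L := L₀.subtype.comp me.toMonoidHom with hρ
  have hρc : Continuous ρ := by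
    have h : ⇑ρ = fun x : Shrink.{w} ↥L₀ => ((me x : ↥L₀) : L) := by
      funext x; rfl
    rw [h]
    exact continuous_subtype_val.comp hmec
  obtain ⟨ψ, hψc, hψ⟩ := hUniv (Shrink.{w} ↥L₀) γ₁ continuous_of_discreteTopology
  refine ⟨ρ.comp ψ, hρc.comp hψc, ?_⟩
  have hfac : ρ.comp γ₁ = γ := by
    ext a
    show ((me (me.symm (γ₀ a)) : L₀) : L) = γ a
    rw [MulEquiv.apply_symm_apply]
    rfl
  rw [← hfac, hψ]
  ext a
  rfl

end SmallTransfer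

section WreathLift

open SemidirectProduct

variable {Λ H : Type u} [Group Λ] [Group H]

/-- Inclusion of the full product into the restricted product, when `H` is finite. -/
private def inclR (Λ H : Type u) [Group Λ] [Group H] [Finite H] :
    (H → Λ) →* restrictedProduct H Λ where
  toFun f := ⟨f, Set.toFinite _⟩
  map_one' := rfl
  map_mul' _ _ := rfl

/-- Inclusion of `Λ` into the wreath product at coordinate `h`. -/
private def singleW [Finite H] [DecidableEq H] (h : H) : Λ →* Wreath Λ H :=
  ((SemidirectProduct.inl (φ := shiftAut Λ H)).comp (inclR Λ H)).comp
    (MonoidHom.mulSingle (fun _ : H => Λ) h)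

/-- The coordinatewise extension of `β` on full products. -/
private def pimapHom {K : Type w} [Group K] (H : Type u) (β : Λ →* K) :
    (H → Λ) →* (H → K) where
  toFun f := fun h' => β (f h')
  map_one' := by funext h'; simp
  map_mul' _ _ := by funext h'; simp

private lemma wreath_lift [Finite H] [TopologicalSpace Λ] [DiscreteTopology Λ]
    {K_Λ : Type u} {K_H : Type u}
    [Group K_Λ] [TopologicalSpace K_Λ] [Group K_H] [TopologicalSpace K_H] [T2Space K_H]
    (βΛ : Λ →* K_Λ) (βH : H →* K_H) (e : H ≃* K_H) (he : ∀ h : H, e h = βH h)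
    (hd : DenseRange βΛ)
    {L : Type v} [Group L] [TopologicalSpace L] [IsTopologicalGroup L] [T2Space L]
    (α : Wreath Λ H →* L)
    (hU : ∀ γ : Λ →* L, Continuous γ →
      ∃ γ' : K_Λ →* L, Continuous γ' ∧ γ = γ'.comp βΛ) :
    ∃ α' : ((H → K_Λ) ⋊[(permAut K_Λ H).comp e.symm.toMonoidHom] K_H) →* L,
      Continuous α' ∧ α = α'.comp (wreathCompactMap βΛ βH e he) := by
  classical
  haveI : Fintype H := Fintype.ofFinite H
  haveI : Finite K_H := Finite.of_equiv H e.toEquiv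
  haveI : DiscreteTopology K_H := inferInstance
  -- coordinate homomorphisms Λ →* L and their extensions to K_Λ
  have hUc : ∀ h : H, ∃ A : K_Λ →* L, Continuous A ∧
      α.comp (singleW h) = A.comp βΛ := fun h =>
    hU (α.comp (singleW h)) continuous_of_discreteTopology
  choose A hAc hAfac using hUc
  have hAβ : ∀ (h : H) (x : Λ), A h (βΛ x) = α (singleW h x) := fun h x =>
    (DFunLike.congr_fun (hAfac h) x).symm
  -- pairwise commutation of the images of the extensions
  have comm : Pairwise fun h h' : H => ∀ x y, Commute (A h x) (A h' y) := by
    intro h h' hne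
    have hsub : Set.range (Prod.map (⇑βΛ) (⇑βΛ)) ⊆
        {p : K_Λ × K_Λ | A h p.1 * A h' p.2 = A h' p.2 * A h p.1} := by
      rintro p ⟨⟨a, b⟩, rfl⟩
      show A h (βΛ a) * A h' (βΛ b) = A h' (βΛ b) * A h (βΛ a)
      rw [hAβ, hAβ, ← map_mul, ← map_mul]
      congr 1
      have hcomm := (Pi.mulSingle_commute (f := fun _ : H => Λ) hne a b).eq
      show (SemidirectProduct.inl (inclR Λ H (Pi.mulSingle h a)) : Wreath Λ H)
          * SemidirectProduct.inl (inclR Λ H (Pi.mulSingle h' b))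
          = SemidirectProduct.inl (inclR Λ H (Pi.mulSingle h' b))
          * SemidirectProduct.inl (inclR Λ H (Pi.mulSingle h a))
      have hc2 : inclR Λ H (Pi.mulSingle h a) * inclR Λ H (Pi.mulSingle h' b)
          = inclR Λ H (Pi.mulSingle h' b) * inclR Λ H (Pi.mulSingle h a) := by
        rw [← map_mul, ← map_mul, hcomm]
      have hc3 := congrArg (SemidirectProduct.inl (φ := shiftAut Λ H)) hc2
      rw [map_mul, map_mul] at hc3
      exact hc3
    have hclosed : IsClosed {p : K_Λ × K_Λ | A h p.1 * A h' p.2 = A h' p.2 * A h p.1} :=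
      isClosed_eq (((hAc h).comp continuous_fst).mul ((hAc h').comp continuous_snd))
        (((hAc h').comp continuous_snd).mul ((hAc h).comp continuous_fst))
    intro x y
    have hdense : Dense (Set.range (Prod.map (⇑βΛ) (⇑βΛ))) := hd.prodMap hd
    have : closure (Set.range (Prod.map (⇑βΛ) (⇑βΛ))) ⊆
        {p : K_Λ × K_Λ | A h p.1 * A h' p.2 = A h' p.2 * A h p.1} :=
      hclosed.closure_subset_iff.2 hsub
    have hxy : (x, y) ∈ closure (Set.range (Prod.map (⇑βΛ) (⇑βΛ))) := by
      rw [hdense.closure_eq]; trivial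
    exact this hxy
  -- the coprodut homomorphism on the full product
  set A_N : (H → K_Λ) →* L := MonoidHom.noncommPiCoprod A comm with hA_N
  have contN : Continuous A_N := by
    show Continuous fun F : H → K_Λ =>
      Finset.univ.noncommProd (fun i => A i (F i)) fun i _ j _ hij => comm hij _ _
    exact continuous_noncommProd Finset.univ (fun i (F : H → K_Λ) => A i (F i))
      (fun i => show Continuous fun F : H → K_Λ => A i (F i) from
        (hAc i).comp (continuous_apply i))
      (fun F i j hij => comm hij _ _)
  -- factorization over the restricted product
  have hNpi : A_N.comp (pimapHom H βΛ) =
      (α.comp (SemidirectProduct.inl (φ := shiftAut Λ H))).comp (inclR Λ H) := by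
    refine MonoidHom.pi_ext fun h x => ?_
    have hms : pimapHom H βΛ (Pi.mulSingle h x) = Pi.mulSingle h (βΛ x) := by
      funext h'
      rcases eq_or_ne h' h with rfl | hne
      · simp [pimapHom]
      · simp [pimapHom, Pi.mulSingle_eq_of_ne hne]
    show A_N (pimapHom H βΛ (Pi.mulSingle h x)) = _
    rw [hms, hA_N, MonoidHom.noncommPiCoprod_mulSingle, hAβ]
    rfl
  have hNpi' : ∀ g : H → Λ, A_N (fun h' => βΛ (g h')) = α (inl (inclR Λ H g)) :=
    fun g => DFunLike.congr_fun hNpi g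
  -- the homomorphism on K_H
  set A_H : K_H →* L := (α.comp (SemidirectProduct.inr (φ := shiftAut Λ H))).comp
    e.symm.toMonoidHom with hA_H
  have contH : Continuous A_H := continuous_of_discreteTopology
  have hAH : ∀ h : H, A_H (e h) = α (inr h) := by
    intro h
    show α (inr (e.symm (e h))) = α (inr h)
    rw [MulEquiv.symm_apply_apply]
  -- compatibility with the actions
  have hdpi : DenseRange fun (g : H → Λ) (h' : H) => βΛ (g h') := denseRange_pimap hd
  have compat : ∀ k : K_H,
      A_N.comp (((permAut K_Λ H).comp e.symm.toMonoidHom k).toMonoidHom) =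
        (MulAut.conj (A_H k)).toMonoidHom.comp A_N := by
    intro k
    obtain ⟨h, rfl⟩ := e.surjective k
    have hperm : ((permAut K_Λ H).comp e.symm.toMonoidHom (e h)) = permAut K_Λ H h := by
      rw [MonoidHom.comp_apply, MulEquiv.coe_toMonoidHom, MulEquiv.symm_apply_apply]
    rw [hperm]
    have hc1 : Continuous fun F : H → K_Λ => A_N ((permAut K_Λ H h) F) := by
      refine contN.comp ?_
      show Continuous fun F : H → K_Λ => (fun h' => F (h⁻¹ * h'))
      exact continuous_pi fun h' => continuous_apply _
    have hc2 : Continuous fun F : H → K_Λ => A_H (e h) * A_N F * (A_H (e h))⁻¹ :=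
      ((continuous_const.mul contN).mul continuous_const)
    have heq : (fun F : H → K_Λ => A_N ((permAut K_Λ H h) F))
        ∘ (fun (g : H → Λ) (h' : H) => βΛ (g h'))
        = (fun F : H → K_Λ => A_H (e h) * A_N F * (A_H (e h))⁻¹)
        ∘ (fun (g : H → Λ) (h' : H) => βΛ (g h')) := by
      funext g
      show A_N (fun h' => βΛ (g (h⁻¹ * h'))) = A_H (e h) * A_N (fun h' => βΛ (g h')) * _
      rw [hNpi' (fun h' => g (h⁻¹ * h')), hNpi' g, hAH h]
      have hs : inclR Λ H (fun h' => g (h⁻¹ * h')) = shiftAut Λ H h (inclR Λ H g) := rfl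
      rw [hs, SemidirectProduct.inl_aut]
      have e3 : ∀ x y z : Wreath Λ H, α (x * y * z) = α x * α y * α z :=
        fun x y z => by rw [map_mul, map_mul]
      have e4 : ∀ k : H, α (inr k⁻¹) = (α (inr k))⁻¹ := fun k =>
        (congrArg α (map_inv (SemidirectProduct.inr (φ := shiftAut Λ H)) k)).trans (map_inv α _)
      exact (e3 (inr h) (inl (inclR Λ H g)) (inr h⁻¹)).trans (by rw [e4])
    have key := hdpi.equalizer hc1 hc2 heq
    ext F
    exact congrFun key F
  refine ⟨SemidirectProduct.lift A_N A_H compat, ?_, ?_⟩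
  · show Continuous fun g : (H → K_Λ) ⋊[(permAut K_Λ H).comp e.symm.toMonoidHom] K_H =>
      A_N g.left * A_H g.right
    exact (contN.comp sdp_continuous_left).mul (contH.comp sdp_continuous_right)
  · refine MonoidHom.ext fun w => ?_
    show α w = A_N (toPiMap H βΛ (SemidirectProduct.left w))
      * A_H (βH (SemidirectProduct.right w))
    have h1 : A_N (toPiMap H βΛ (SemidirectProduct.left w))
        = α (inl (SemidirectProduct.left w)) := by
      have h0 := hNpi' ((SemidirectProduct.left w : restrictedProduct H Λ) : H → Λ)
      have hil : inclR Λ H ((SemidirectProduct.left w : restrictedProduct H Λ) : H → Λ)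
          = SemidirectProduct.left w := Subtype.ext rfl
      rw [hil] at h0
      exact h0
    have h2 : A_H (βH (SemidirectProduct.right w)) = α (inr (SemidirectProduct.right w)) := by
      rw [← he, hAH]
    rw [h1, h2]
    exact (congrArg α (SemidirectProduct.inl_left_mul_inr_right w).symm).trans
      (map_mul α (inl (SemidirectProduct.left w)) (inr (SemidirectProduct.right w)))

end WreathLift

theorem wreath_bohr_prof_of_finite
    (Λ : Type u) (H : Type u) [Group Λ] [Group H] [Countable Λ] [Finite H]
    [TopologicalSpace Λ] [DiscreteTopology Λ] [TopologicalSpace H] [DiscreteTopology H]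
    (K_Λ : Type u) [Group K_Λ] [TopologicalSpace K_Λ] (βΛ : Λ →* K_Λ)
    (K_H : Type u) [Group K_H] [TopologicalSpace K_H] (βH : H →* K_H)
    (e : H ≃* K_H) (he : ∀ h : H, e h = βH h)
    (P_Λ : Type u) [Group P_Λ] [TopologicalSpace P_Λ] (αΛ : Λ →* P_Λ)
    (P_H : Type u) [Group P_H] [TopologicalSpace P_H] (αH : H →* P_H)
    (e' : H ≃* P_H) (he' : ∀ h : H, e' h = αH h) :
    (IsBohrCompactification Λ K_Λ βΛ → IsBohrCompactification H K_H βH →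
      IsBohrCompactification (Wreath Λ H)
        ((H → K_Λ) ⋊[(permAut K_Λ H).comp e.symm.toMonoidHom] K_H)
        (wreathCompactMap βΛ βH e he)) ∧
      (IsProfiniteCompletion Λ P_Λ αΛ → IsProfiniteCompletion H P_H αH →
        IsProfiniteCompletion (Wreath Λ H)
          ((H → P_Λ) ⋊[(permAut P_Λ H).comp e'.symm.toMonoidHom] P_H)
          (wreathCompactMap αΛ αH e' he')) := by
  constructor
  · rintro ⟨hTGΛ, hCSΛ, hT2Λ, hcΛ, hdΛ, hUΛ⟩ ⟨hTGH, hCSH, hT2H, hcH, hdH, hUH⟩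
    haveI := hTGΛ; haveI := hCSΛ; haveI := hT2Λ; haveI := hT2H
    haveI : Finite K_H := Finite.of_equiv H e.toEquiv
    haveI : DiscreteTopology K_H := inferInstance
    set homeo := sdpHomeo (H → K_Λ) K_H ((permAut K_Λ H).comp e.symm.toMonoidHom) with hhomeo
    have contPi : Continuous (⇑(toPiMap H βΛ)) :=
      continuous_pi fun h' => hcΛ.comp ((continuous_apply h').comp continuous_subtype_val)
    refine ⟨?_, ?_, ?_, ?_, ?_, ?_⟩
    · refine sdp_topologicalGroup fun a => ?_
      show Continuous fun F : H → K_Λ => (fun h' => F ((e.symm a)⁻¹ * h'))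
      exact continuous_pi fun h' => continuous_apply _
    · exact homeo.symm.compactSpace
    · exact homeo.symm.t2Space
    · exact continuous_of_discreteTopology
    · -- dense range
      have hsurjV : Function.Surjective
          (fun f : restrictedProduct H Λ => (f : H → Λ)) :=
        fun f => ⟨⟨f, Set.toFinite _⟩, rfl⟩
      have dN : DenseRange (⇑(toPiMap H βΛ)) := by
        have hfac : ⇑(toPiMap H βΛ) = (fun (g : H → Λ) (h' : H) => βΛ (g h'))
            ∘ (fun f : restrictedProduct H Λ => (f : H → Λ)) := rfl
        rw [hfac]
        exact (denseRange_pimap hdΛ).comp hsurjV.denseRange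
          (continuous_pi fun h' => hcΛ.comp (continuous_apply h'))
      have hsurjH : Function.Surjective ⇑βH :=
        fun k => ⟨e.symm k, by rw [← he, MulEquiv.apply_symm_apply]⟩
      have hsurjW : Function.Surjective (fun w : Wreath Λ H =>
          (SemidirectProduct.left w, SemidirectProduct.right w)) :=
        fun p => ⟨⟨p.1, p.2⟩, rfl⟩
      have hcomp : ⇑(wreathCompactMap βΛ βH e he) =
          (⇑homeo.symm ∘ Prod.map (⇑(toPiMap H βΛ)) ⇑βH) ∘
            (fun w : Wreath Λ H =>
              (SemidirectProduct.left w, SemidirectProduct.right w)) := rfl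
      rw [hcomp]
      have d1 : DenseRange (Prod.map (⇑(toPiMap H βΛ)) ⇑βH) :=
        dN.prodMap hsurjH.denseRange
      have d2 : DenseRange (⇑homeo.symm ∘ Prod.map (⇑(toPiMap H βΛ)) ⇑βH) :=
        (homeo.symm.surjective.denseRange).comp d1 homeo.symm.continuous
      exact d2.comp hsurjW.denseRange
        (homeo.symm.continuous.comp (contPi.prodMap continuous_of_discreteTopology))
    · intro L _ _ _ _ _ α hαc
      exact wreath_lift βΛ βH e he hdΛ α fun γ _ => universal_transfer βΛ hUΛ γ
  · rintro ⟨hTGΛ, hCSΛ, hT2Λ, hTDΛ, hcΛ, hdΛ, hUΛ⟩ ⟨hTGH, hCSH, hT2H, hTDH, hcH, hdH, hUH⟩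
    haveI := hTGΛ; haveI := hCSΛ; haveI := hT2Λ; haveI := hTDΛ; haveI := hT2H
    haveI : Finite P_H := Finite.of_equiv H e'.toEquiv
    haveI : DiscreteTopology P_H := inferInstance
    set homeo := sdpHomeo (H → P_Λ) P_H ((permAut P_Λ H).comp e'.symm.toMonoidHom) with hhomeo
    have contPi : Continuous (⇑(toPiMap H αΛ)) :=
      continuous_pi fun h' => hcΛ.comp ((continuous_apply h').comp continuous_subtype_val)
    refine ⟨?_, ?_, ?_, ?_, ?_, ?_, ?_⟩
    · refine sdp_topologicalGroup fun a => ?_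
      show Continuous fun F : H → P_Λ => (fun h' => F ((e'.symm a)⁻¹ * h'))
      exact continuous_pi fun h' => continuous_apply _
    · exact homeo.symm.compactSpace
    · exact homeo.symm.t2Space
    · exact homeo.isEmbedding.isTotallyDisconnected_range.mp
        (isTotallyDisconnected_of_totallyDisconnectedSpace _)
    · exact continuous_of_discreteTopology
    · -- dense range
      have hsurjV : Function.Surjective
          (fun f : restrictedProduct H Λ => (f : H → Λ)) :=
        fun f => ⟨⟨f, Set.toFinite _⟩, rfl⟩
      have dN : DenseRange (⇑(toPiMap H αΛ)) := by
        have hfac : ⇑(toPiMap H αΛ) = (fun (g : H → Λ) (h' : H) => αΛ (g h'))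
            ∘ (fun f : restrictedProduct H Λ => (f : H → Λ)) := rfl
        rw [hfac]
        exact (denseRange_pimap hdΛ).comp hsurjV.denseRange
          (continuous_pi fun h' => hcΛ.comp (continuous_apply h'))
      have hsurjH : Function.Surjective ⇑αH :=
        fun k => ⟨e'.symm k, by rw [← he', MulEquiv.apply_symm_apply]⟩
      have hsurjW : Function.Surjective (fun w : Wreath Λ H =>
          (SemidirectProduct.left w, SemidirectProduct.right w)) :=
        fun p => ⟨⟨p.1, p.2⟩, rfl⟩
      have hcomp : ⇑(wreathCompactMap αΛ αH e' he') =
          (⇑homeo.symm ∘ Prod.map (⇑(toPiMap H αΛ)) ⇑αH) ∘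
            (fun w : Wreath Λ H =>
              (SemidirectProduct.left w, SemidirectProduct.right w)) := rfl
      rw [hcomp]
      have d1 : DenseRange (Prod.map (⇑(toPiMap H αΛ)) ⇑αH) :=
        dN.prodMap hsurjH.denseRange
      have d2 : DenseRange (⇑homeo.symm ∘ Prod.map (⇑(toPiMap H αΛ)) ⇑αH) :=
        (homeo.symm.surjective.denseRange).comp d1 homeo.symm.continuous
      exact d2.comp hsurjW.denseRange
        (homeo.symm.continuous.comp (contPi.prodMap continuous_of_discreteTopology))
    · intro L _ _ _ _ _ _ γ hγc
      exact wreath_lift αΛ αH e' he' hdΛ γ fun δ _ => universal_transfer_td αΛ hUΛ δ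
end

section
/- Let G be a topological group, N a closed normal subgroup of G, and (K, α) a profinite completion of G. Let M be the closure of α(N) in K (a closed normal subgroup of K). Then the quotient K/M, together with the continuous homomorphism G/N → K/M induced by α, is a profinite completion of the quotient group G/N. In particular, the induced homomorphism Prof(G) → Prof(G/N) is surjective with kernel the closure of α(N). -/
universe u v w

section Aux

variable {G : Type u} [Group G] [TopologicalSpace G]
  {K : Type v} [Group K] [TopologicalSpace K] [IsTopologicalGroup K] [CompactSpace K]
  [T2Space K] [TotallyDisconnectedSpace K]

/-- Transfer of the universal property to finite discrete targets in another universe. -/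
lemma univ_transfer_finite.{x, y} (α : G →* K) (hαcont : Continuous α)
    (huniv : ∀ (L : Type x) [Group L] [TopologicalSpace L] [IsTopologicalGroup L] [CompactSpace L]
      [T2Space L] [TotallyDisconnectedSpace L] (γ : G →* L), Continuous γ →
        ∃ γ' : K →* L, Continuous γ' ∧ γ = γ'.comp α)
    (F : Type y) [Group F] [TopologicalSpace F] [DiscreteTopology F] [Finite F]
    (φ : G →* F) (hφ : Continuous φ) :
    ∃ φ' : K →* F, Continuous φ' ∧ φ = φ'.comp α := by
  obtain ⟨n, ⟨e⟩⟩ := Finite.exists_equiv_fin F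
  letI : Group (Fin n) := e.symm.group
  letI : TopologicalSpace (ULift.{x} (Fin n)) := ⊥
  haveI : DiscreteTopology (ULift.{x} (Fin n)) := ⟨rfl⟩
  haveI : IsTopologicalGroup (ULift.{x} (Fin n)) := ⟨⟩
  let d : F →* ULift.{x} (Fin n) :=
    { toFun := fun f => ⟨e f⟩
      map_one' := rfl
      map_mul' := fun a b => by
        refine ULift.ext _ _ ?_
        show e (a * b) = e (e.symm (e a) * e.symm (e b))
        rw [e.symm_apply_apply, e.symm_apply_apply]
      }
  let u : ULift.{x} (Fin n) →* F :=
    { toFun := fun a => e.symm a.down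
      map_one' := by
        show e.symm (e 1) = 1
        exact e.symm_apply_apply 1
      map_mul' := fun a b => by
        show e.symm (e (e.symm a.down * e.symm b.down)) = _
        exact e.symm_apply_apply _ }
  have hud : ∀ f : F, u (d f) = f := fun f => e.symm_apply_apply f
  let ψ : G →* ULift.{x} (Fin n) := d.comp φ
  have hψ : Continuous ψ := by
    have hd : Continuous (⇑d) := continuous_of_discreteTopology
    exact hd.comp hφ
  obtain ⟨ψ', hψ'cont, hψ'eq⟩ := huniv (ULift.{x} (Fin n)) ψ hψ
  have hu : Continuous (⇑u) := continuous_of_discreteTopology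
  refine ⟨u.comp ψ', hu.comp hψ'cont, ?_⟩
  ext g
  have h1 : ψ' (α g) = ψ g := by rw [hψ'eq]; rfl
  show φ g = u (ψ' (α g))
  rw [h1]
  exact (hud (φ g)).symm

/-- Transfer of the universal property to profinite targets in another universe. -/
lemma univ_transfer.{x, y} (α : G →* K) (hαcont : Continuous α) (hαdense : DenseRange α)
    (huniv : ∀ (L : Type x) [Group L] [TopologicalSpace L] [IsTopologicalGroup L] [CompactSpace L]
      [T2Space L] [TotallyDisconnectedSpace L] (γ : G →* L), Continuous γ →
        ∃ γ' : K →* L, Continuous γ' ∧ γ = γ'.comp α)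
    (L : Type y) [Group L] [TopologicalSpace L] [IsTopologicalGroup L] [CompactSpace L]
    [T2Space L] [TotallyDisconnectedSpace L] (γ : G →* L) (hγ : Continuous γ) :
    ∃ γ' : K →* L, Continuous γ' ∧ γ = γ'.comp α := by
  classical
  -- the product of finite quotients of `L`
  let P : Type y := Π U : OpenNormalSubgroup L, L ⧸ U.toSubgroup
  haveI : ∀ U : OpenNormalSubgroup L, DiscreteTopology (L ⧸ U.toSubgroup) :=
    fun U => QuotientGroup.discreteTopology U.isOpen'
  haveI : ∀ U : OpenNormalSubgroup L, Finite (L ⧸ U.toSubgroup) :=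
    fun U => Subgroup.quotient_finite_of_isOpen U.toSubgroup U.isOpen'
  -- for each open normal subgroup, factor the composite through `K`
  have hfac : ∀ U : OpenNormalSubgroup L,
      ∃ φ' : K →* L ⧸ U.toSubgroup, Continuous φ' ∧
        (QuotientGroup.mk' U.toSubgroup).comp γ = φ'.comp α := fun U =>
    univ_transfer_finite α hαcont huniv (L ⧸ U.toSubgroup)
      ((QuotientGroup.mk' U.toSubgroup).comp γ) (QuotientGroup.continuous_mk.comp hγ)
  choose φ' hφ'cont hφ'eq using hfac
  -- assemble into a map to the product
  let Ψ : K →* P :=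
    { toFun := fun k U => φ' U k
      map_one' := by funext U; exact map_one (φ' U)
      map_mul' := fun a b => by funext U; exact map_mul (φ' U) a b }
  have hΨcont : Continuous Ψ := continuous_pi fun U => hφ'cont U
  -- the diagonal embedding of `L`
  let ι : L →* P :=
    { toFun := fun l U => QuotientGroup.mk l
      map_one' := by funext U; rfl
      map_mul' := fun a b => by funext U; rfl }
  have hιcont : Continuous ι := continuous_pi fun U => QuotientGroup.continuous_mk
  have hιinj : Function.Injective ι := by
    refine (injective_iff_map_eq_one ι).mpr fun l hl => ?_
    by_contra hne
    have h1 : (1 : L) ∈ ({l}ᶜ : Set L) := fun h => hne (Set.mem_singleton_iff.mp h).symm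
    obtain ⟨W, hWclopen, h1W, hWsub⟩ :=
      compact_exists_isClopen_in_isOpen (isOpen_compl_singleton) h1
    obtain ⟨H, hH⟩ :=
      IsTopologicalGroup.exist_openNormalSubgroup_sub_clopen_nhds_of_one hWclopen h1W
    have : (QuotientGroup.mk l : L ⧸ H.toSubgroup) = 1 := congrFun hl H
    have hlH : l ∈ H.toSubgroup := (QuotientGroup.eq_one_iff l).mp this
    exact hWsub (hH hlH) rfl
  have hemb := hιcont.isClosedEmbedding hιinj
  -- `Ψ ∘ α = ι ∘ γ`
  have hcomm : ∀ g : G, Ψ (α g) = ι (γ g) := by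
    intro g
    funext U
    have := congrFun (congrArg (fun f : G →* L ⧸ U.toSubgroup => (f : G → L ⧸ U.toSubgroup))
      (hφ'eq U)) g
    exact this.symm
  -- the range of `Ψ` lands in the range of `ι`
  have hrange : ∀ k : K, Ψ k ∈ Set.range ι := by
    have hcl : IsClosed (Ψ ⁻¹' Set.range ι) := hemb.isClosed_range.preimage hΨcont
    have hsub : Set.range α ⊆ Ψ ⁻¹' Set.range ι := by
      rintro - ⟨g, rfl⟩
      exact ⟨γ g, (hcomm g).symm⟩
    have : closure (Set.range α) ⊆ Ψ ⁻¹' Set.range ι := closure_minimal hsub hcl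
    rw [hαdense.closure_eq] at this
    exact fun k => this (Set.mem_univ k)
  have hspec : ∀ k : K, ι ((hrange k).choose) = Ψ k := fun k => (hrange k).choose_spec
  let γ' : K →* L :=
    { toFun := fun k => (hrange k).choose
      map_one' := hιinj (by rw [hspec, map_one, map_one])
      map_mul' := fun a b => hιinj (by rw [hspec, map_mul, map_mul, hspec, hspec]) }
  have hγ'cont : Continuous γ' := by
    rw [hemb.toIsEmbedding.continuous_iff]
    have : (ι ∘ γ') = Ψ := funext fun k => hspec k
    rw [this]
    exact hΨcont
  refine ⟨γ', hγ'cont, ?_⟩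
  ext g
  refine (hιinj ?_).symm
  show ι (γ' (α g)) = ι (γ g)
  have h2 : ι (γ' (α g)) = Ψ (α g) := hspec (α g)
  rw [h2]
  exact hcomm g

end Aux

theorem profinite_completion_of_quotient
    {G : Type u} [Group G] [TopologicalSpace G] [IsTopologicalGroup G]
    (K : Type v) [Group K] [TopologicalSpace K] [IsTopologicalGroup K] [CompactSpace K]
    [T2Space K] [TotallyDisconnectedSpace K]
    (α : G →* K) (hα : IsProfiniteCompletion G K α)
    (N : Subgroup G) [hN : N.Normal] :
    ∃ hM : ((N.map α).topologicalClosure).Normal,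
      letI := hM
      IsProfiniteCompletion (G ⧸ N) (K ⧸ (N.map α).topologicalClosure)
        (QuotientGroup.map N ((N.map α).topologicalClosure) α
          (fun n hn => Subgroup.le_topologicalClosure _ (Subgroup.mem_map_of_mem α hn))) := by
  obtain ⟨-, -, -, -, hαcont, hαdense, huniv⟩ := hα
  set M : Subgroup K := (N.map α).topologicalClosure with hMdef
  have hMclosed : IsClosed (M : Set K) := Subgroup.isClosed_topologicalClosure _
  -- conjugation by elements of the range of α preserves M
  have hconj : ∀ g : G, ∀ n ∈ M, α g * n * (α g)⁻¹ ∈ M := by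
    intro g n hn
    have hc : Continuous fun x : K => α g * x * (α g)⁻¹ := by continuity
    have himg : (fun x : K => α g * x * (α g)⁻¹) '' (N.map α : Set K) ⊆ (M : Set K) := by
      rintro - ⟨-, ⟨m, hm, rfl⟩, rfl⟩
      exact Subgroup.le_topologicalClosure _
        ⟨g * m * g⁻¹, hN.conj_mem m hm g, by simp [mul_assoc]⟩
    have := (image_closure_subset_closure_image (s := (N.map α : Set K)) hc).trans
      (closure_mono himg)
    rw [hMclosed.closure_eq] at this
    exact this ⟨n, hn, rfl⟩
  have hM : M.Normal := by
    constructor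
    intro n hn k
    have hCclosed : IsClosed {x : K | x * n * x⁻¹ ∈ M} := by
      have : Continuous fun x : K => x * n * x⁻¹ := by continuity
      exact hMclosed.preimage this
    have hsub : Set.range α ⊆ {x : K | x * n * x⁻¹ ∈ M} := by
      rintro - ⟨g, rfl⟩; exact hconj g n hn
    have huniv' : closure (Set.range α) ⊆ {x : K | x * n * x⁻¹ ∈ M} :=
      closure_minimal hsub hCclosed
    rw [hαdense.closure_eq] at huniv'
    exact huniv' (Set.mem_univ k)
  refine ⟨hM, ?_, ?_, ?_, ?_, ?_, ?_, ?_⟩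
  · infer_instance
  · infer_instance
  · infer_instance
  · -- totally disconnected
    haveI : NonarchimedeanGroup (K ⧸ M) := by
      constructor
      intro U hU
      have h1 : ((QuotientGroup.mk : K → K ⧸ M) ⁻¹' U) ∈ nhds (1 : K) := by
        have := QuotientGroup.continuous_mk (N := M) |>.continuousAt (x := (1 : K))
        simpa using this hU
      obtain ⟨V, hVU, hVopen, h1V⟩ := mem_nhds_iff.mp h1
      obtain ⟨W, hWclopen, h1W, hWV⟩ := compact_exists_isClopen_in_isOpen hVopen h1V
      obtain ⟨H, hH⟩ :=
        IsTopologicalGroup.exist_openNormalSubgroup_sub_clopen_nhds_of_one hWclopen h1W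
      refine ⟨⟨H.toSubgroup.map (QuotientGroup.mk' M), ?_⟩, ?_⟩
      · have := QuotientGroup.isOpenMap_coe (N := M) _ H.isOpen'
        exact this
      · rintro - ⟨x, hx, rfl⟩
        exact hVU (hWV (hH hx))
    infer_instance
  · -- continuity of the induced map
    rw [(QuotientGroup.isQuotientMap_mk N).continuous_iff]
    exact QuotientGroup.continuous_mk.comp hαcont
  · -- dense range
    have hd : DenseRange ((QuotientGroup.mk : K → K ⧸ M) ∘ α) :=
      (QuotientGroup.isOpenQuotientMap_mk.isQuotientMap.surjective.denseRange).comp hαdense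
        QuotientGroup.continuous_mk
    have heq : Set.range (QuotientGroup.map N M α
        (fun n hn => Subgroup.le_topologicalClosure _ (Subgroup.mem_map_of_mem α hn)))
        = Set.range ((QuotientGroup.mk : K → K ⧸ M) ∘ α) := by
      ext x
      constructor
      · rintro ⟨y, rfl⟩
        obtain ⟨g, rfl⟩ := QuotientGroup.mk_surjective y
        exact ⟨g, rfl⟩
      · rintro ⟨g, rfl⟩
        exact ⟨QuotientGroup.mk g, rfl⟩
    rw [DenseRange, heq]
    exact hd
  · -- universal property
    intro L _ _ _ _ _ _ γ hγ
    obtain ⟨γ', hγ'cont, hγ'eq⟩ := univ_transfer α hαcont hαdense huniv L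
      (γ.comp (QuotientGroup.mk' N)) (hγ.comp QuotientGroup.continuous_mk)
    have hker : M ≤ γ'.ker := by
      apply Subgroup.topologicalClosure_minimal
      · rintro - ⟨n, hn, rfl⟩
        have h1 : γ' (α n) = γ ((QuotientGroup.mk' N) n) :=
          (DFunLike.congr_fun hγ'eq n).symm
        have h2 : (QuotientGroup.mk n : G ⧸ N) = 1 := (QuotientGroup.eq_one_iff n).mpr hn
        simp only [MonoidHom.mem_ker, h1]
        rw [QuotientGroup.mk'_apply, h2, map_one]
      · exact IsClosed.preimage hγ'cont isClosed_singleton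
    refine ⟨QuotientGroup.lift M γ' hker, ?_, ?_⟩
    · rw [(QuotientGroup.isQuotientMap_mk M).continuous_iff]
      exact hγ'cont
    · refine MonoidHom.ext fun x => ?_
      obtain ⟨g, rfl⟩ := QuotientGroup.mk_surjective x
      have h1 : γ' (α g) = γ ((QuotientGroup.mk' N) g) :=
        (DFunLike.congr_fun hγ'eq g).symm
      exact h1.symm
end
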